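/- arXiv:0801.3480 — 2 statements merged into one kernel-verified Lean document; each statement's English description precedes it below -/
import Mathlib

section
/- Let g be a finite-dimensional Lie algebra and P a symmetric invariant bilinear form on g, regarded as the closed degree-4 element P = P_{ab}(σt^a)∧(σt^b) of the Weil algebra W(g). Then the degree-3 element cs := P_{ab}(d_W t^a)∧t^b + (1/3) C_{abc} t^a∧t^b∧t^c (where C_{abc} := P_{ad}C^d_{bc}) satisfies d_W(cs) = P, and its restriction along i* : W(g) → CE(g) is i*(cs) = (1/3)C_{abc} t^a∧t^b∧t^c − (1/2)C_{abc}t^a∧t^b∧t^c, a scalar multiple of the canonical 3-cocycle μ(x,y,z) = P(x,[y,z]). In particular P transgresses to a nonzero multiple of μ. -/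
-- permutation helpers for nested sums over `univ`
private lemma sum_swap12 {ι : Type*} [Fintype ι] {M : Type*} [AddCommMonoid M]
    (f : ι → ι → ι → M) :
    ∑ a : ι, ∑ b : ι, ∑ c : ι, f a b c = ∑ a : ι, ∑ b : ι, ∑ c : ι, f b a c :=
  Finset.sum_comm

private lemma sum_swap23 {ι : Type*} [Fintype ι] {M : Type*} [AddCommMonoid M]
    (f : ι → ι → ι → M) :
    ∑ a : ι, ∑ b : ι, ∑ c : ι, f a b c = ∑ a : ι, ∑ b : ι, ∑ c : ι, f a c b :=
  Finset.sum_congr rfl fun _ _ => Finset.sum_comm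

private lemma sum_rot3 {ι : Type*} [Fintype ι] {M : Type*} [AddCommMonoid M]
    (f : ι → ι → ι → M) :
    ∑ a : ι, ∑ b : ι, ∑ c : ι, f a b c = ∑ a : ι, ∑ b : ι, ∑ c : ι, f b c a := by
  rw [sum_swap23 f]; exact sum_swap12 fun a b c => f a c b

private lemma sum4_swap23 {ι : Type*} [Fintype ι] {M : Type*} [AddCommMonoid M]
    (f : ι → ι → ι → ι → M) :
    ∑ a : ι, ∑ b : ι, ∑ c : ι, ∑ d : ι, f a b c d
      = ∑ a : ι, ∑ b : ι, ∑ c : ι, ∑ d : ι, f a c b d :=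
  Finset.sum_congr rfl fun _ _ => Finset.sum_comm

private lemma sum4_swap34 {ι : Type*} [Fintype ι] {M : Type*} [AddCommMonoid M]
    (f : ι → ι → ι → ι → M) :
    ∑ a : ι, ∑ b : ι, ∑ c : ι, ∑ d : ι, f a b c d
      = ∑ a : ι, ∑ b : ι, ∑ c : ι, ∑ d : ι, f a b d c :=
  Finset.sum_congr rfl fun _ _ => Finset.sum_congr rfl fun _ _ => Finset.sum_comm

private lemma sum4_rot {ι : Type*} [Fintype ι] {M : Type*} [AddCommMonoid M]
    (f : ι → ι → ι → ι → M) :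
    ∑ a : ι, ∑ b : ι, ∑ c : ι, ∑ d : ι, f a b c d
      = ∑ a : ι, ∑ b : ι, ∑ c : ι, ∑ d : ι, f a c d b := by
  rw [sum4_swap34 f]; exact sum4_swap23 fun a b c d => f a b d c

-- pull the outermost of three sums innermost
private lemma sum_pull3 {ι : Type*} [Fintype ι] {M : Type*} [AddCommMonoid M]
    (f : ι → ι → ι → M) :
    ∑ a : ι, ∑ b : ι, ∑ c : ι, f a b c = ∑ b : ι, ∑ c : ι, ∑ a : ι, f a b c := by
  rw [show (∑ a : ι, ∑ b : ι, ∑ c : ι, f a b c)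
      = ∑ b : ι, ∑ a : ι, ∑ c : ι, f a b c from Finset.sum_comm]
  exact Finset.sum_congr rfl fun _ _ => Finset.sum_comm

-- pull the outermost of five sums innermost
private lemma sum_pull5 {ι : Type*} [Fintype ι] {M : Type*} [AddCommMonoid M]
    (f : ι → ι → ι → ι → ι → M) :
    ∑ a : ι, ∑ b : ι, ∑ c : ι, ∑ d : ι, ∑ e : ι, f a b c d e
      = ∑ b : ι, ∑ c : ι, ∑ d : ι, ∑ e : ι, ∑ a : ι, f a b c d e := by
  rw [show (∑ a : ι, ∑ b : ι, ∑ c : ι, ∑ d : ι, ∑ e : ι, f a b c d e)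
      = ∑ b : ι, ∑ a : ι, ∑ c : ι, ∑ d : ι, ∑ e : ι, f a b c d e from Finset.sum_comm]
  exact Finset.sum_congr rfl fun b _ => (sum_pull3 (fun a c d => ∑ e : ι, f a b c d e)).trans
    (Finset.sum_congr rfl fun c _ => Finset.sum_congr rfl fun d _ => Finset.sum_comm)

-- pull the outermost of four sums innermost
private lemma sum_pull4 {ι : Type*} [Fintype ι] {M : Type*} [AddCommMonoid M]
    (f : ι → ι → ι → ι → M) :
    ∑ a : ι, ∑ b : ι, ∑ c : ι, ∑ d : ι, f a b c d
      = ∑ b : ι, ∑ c : ι, ∑ d : ι, ∑ a : ι, f a b c d := by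
  rw [show (∑ a : ι, ∑ b : ι, ∑ c : ι, ∑ d : ι, f a b c d)
      = ∑ b : ι, ∑ a : ι, ∑ c : ι, ∑ d : ι, f a b c d from Finset.sum_comm]
  exact Finset.sum_congr rfl fun b _ => sum_pull3 fun a c d => f a b c d

/-- **Transgression of an invariant bilinear form to the canonical 3-cocycle.**
Let `g` be a finite-dimensional real Lie algebra with basis `Bg`, invariant symmetric
bilinear form `Bl` (components `P_{ab} = Bl (Bg a) (Bg b)`, and
`C_{abc} = Bl (Bg a) ⁅Bg b, Bg c⁆`), let `A` be (a model of) the Weil algebra `W(g)` with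
generators `t a, s a = σ t a` and let `i : W(g) → CE(g)` be the canonical surjection
killing the shifted generators.  Then the degree-3 element
`cs = P_{ab} (d t^a) t^b + (1/3) C_{abc} t^a t^b t^c`
satisfies `d cs = P_{ab} σt^a σt^b`, and
`i(cs) = (1/3 - 1/2) C_{abc} t^a t^b t^c`, a (nonzero) scalar multiple of the canonical
3-cocycle `μ(x,y,z) = Bl(x,[y,z])`; hence `P` transgresses to a nonzero multiple of `μ`. -/
theorem bilinear_invariant_polynomial_transgresses
    {ι : Type*} [Fintype ι]
    (g : Type*) [LieRing g] [LieAlgebra ℝ g] (Bg : Module.Basis ι ℝ g)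
    (Bl : g →ₗ[ℝ] g →ₗ[ℝ] ℝ)
    (hsymm : ∀ x y : g, Bl x y = Bl y x)
    (hinv : ∀ x y z : g, Bl ⁅x, y⁆ z = Bl x ⁅y, z⁆)
    -- the Weil algebra W(g):
    (A : Type*) [Ring A] [Algebra ℝ A]
    (ε : A →ₐ[ℝ] A) (d : A →ₗ[ℝ] A)
    (hee : ∀ x : A, ε (ε x) = x)
    (heven : ∀ x y : A, ε x = x → x * y = y * x)
    (hodd : ∀ x y : A, ε x = -x → ε y = -y → x * y = -(y * x))
    (hleib : ∀ x y : A, d (x * y) = d x * y + ε x * d y)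
    (hd2 : ∀ x : A, d (d x) = 0)
    (t s : ι → A)
    (het : ∀ a, ε (t a) = - t a)
    (hes : ∀ a, ε (s a) = s a)
    (hdt : ∀ a, d (t a) =
      (-(1 : ℝ)/2) • (∑ b : ι, ∑ c : ι, ((Bg.repr ⁅Bg b, Bg c⁆) a) • (t b * t c)) + s a)
    (hds : ∀ a, d (s a) =
      - ∑ b : ι, ∑ c : ι, ((Bg.repr ⁅Bg b, Bg c⁆) a) • (t b * s c))
    -- the Chevalley–Eilenberg algebra CE(g) and the surjection i* :
    (B : Type*) [Ring B] [Algebra ℝ B]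
    (tc : ι → B)
    (i : A →ₐ[ℝ] B)
    (hit : ∀ a, i (t a) = tc a)
    (his : ∀ a, i (s a) = 0) :
    -- the Chern-Simons element transgresses P to a nonzero multiple of μ:
    d (∑ a : ι, ∑ b : ι, (Bl (Bg a) (Bg b)) • (d (t a) * t b)
        + ((1 : ℝ)/3) • ∑ a : ι, ∑ b : ι, ∑ c : ι,
            (Bl (Bg a) ⁅Bg b, Bg c⁆) • (t a * t b * t c))
      = ∑ a : ι, ∑ b : ι, (Bl (Bg a) (Bg b)) • (s a * s b) ∧
    i (∑ a : ι, ∑ b : ι, (Bl (Bg a) (Bg b)) • (d (t a) * t b)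
        + ((1 : ℝ)/3) • ∑ a : ι, ∑ b : ι, ∑ c : ι,
            (Bl (Bg a) ⁅Bg b, Bg c⁆) • (t a * t b * t c))
      = ((1 : ℝ)/3 - (1 : ℝ)/2) • ∑ a : ι, ∑ b : ι, ∑ c : ι,
            (Bl (Bg a) ⁅Bg b, Bg c⁆) • (tc a * tc b * tc c) := by
  classical
  -- abbreviations
  set q : ι → A := fun a =>
    ∑ b : ι, ∑ c : ι, ((Bg.repr ⁅Bg b, Bg c⁆) a) • (t b * t c) with hq
  -- basic (anti)commutation facts
  have hswap : ∀ a b : ι, t a * t b = -(t b * t a) := fun a b => hodd _ _ (het a) (het b)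
  have hεt2 : ∀ a b : ι, ε (t a * t b) = t a * t b := by
    intro a b; rw [map_mul, het, het, neg_mul_neg]
  have hεq : ∀ a : ι, ε (q a) = q a := by
    intro a
    simp only [hq, map_sum, map_smul, hεt2]
  have hεdt : ∀ a : ι, ε (d (t a)) = d (t a) := by
    intro a; rw [hdt a, map_add, map_smul, hεq, hes]
  -- contraction lemmas
  have hcontr : ∀ (x y : g), ∑ a : ι, (Bg.repr x a) * Bl (Bg a) y = Bl x y := by
    intro x y
    conv_rhs => rw [← Bg.sum_repr x]
    simp [Finset.sum_apply, smul_eq_mul, -Module.Basis.sum_repr]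
  have hexp2 : ∀ (x y : g), Bl y x = ∑ a : ι, (Bg.repr x a) * Bl y (Bg a) := by
    intro x y
    conv_lhs => rw [← Bg.sum_repr x]
    simp [smul_eq_mul, -Module.Basis.sum_repr]
  -- symmetry lemmas for the structure coefficients
  have hCrot : ∀ x y z : g, Bl x ⁅y, z⁆ = Bl z ⁅x, y⁆ := by
    intro x y z; rw [← hinv, hsymm]
  have hCsw12 : ∀ x y z : g, Bl y ⁅x, z⁆ = - Bl x ⁅y, z⁆ := by
    intro x y z
    rw [← hinv, ← hinv, ← lie_skew x y, map_neg, LinearMap.neg_apply, neg_neg]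
  have hdt' : ∀ a, d (t a) = (-(1 : ℝ)/2) • q a + s a := hdt
  have hs : ∀ a, s a = d (t a) + ((1 : ℝ)/2) • q a := by
    intro a; rw [hdt' a]; module
  -- generic contraction helpers
  have hqmul' : ∀ (y : g) (X : A),
      (∑ b : ι, (Bl y (Bg b)) • (X * q b))
        = ∑ e : ι, ∑ f : ι, (Bl y ⁅Bg e, Bg f⁆) • (X * (t e * t f)) := by
    intro y X
    have e1 : ∀ b : ι, X * q b = ∑ e : ι, ∑ f : ι,
        ((Bg.repr ⁅Bg e, Bg f⁆) b) • (X * (t e * t f)) := by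
      intro b
      simp only [hq, Finset.mul_sum, mul_smul_comm]
    simp only [e1, Finset.smul_sum, smul_smul]
    rw [sum_pull3 (fun b e f => (Bl y (Bg b) * (Bg.repr ⁅Bg e, Bg f⁆) b) • (X * (t e * t f)))]
    refine Finset.sum_congr rfl fun e _ => Finset.sum_congr rfl fun f _ => ?_
    rw [← Finset.sum_smul]
    congr 1
    rw [hexp2 ⁅Bg e, Bg f⁆ y]
    exact Finset.sum_congr rfl fun a _ => mul_comm _ _
  have hqmul : ∀ (y : g) (X : A),
      (∑ a : ι, (Bl (Bg a) y) • (q a * X))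
        = ∑ c : ι, ∑ d : ι, (Bl ⁅Bg c, Bg d⁆ y) • ((t c * t d) * X) := by
    intro y X
    have e1 : ∀ a : ι, q a * X = ∑ c : ι, ∑ d : ι,
        ((Bg.repr ⁅Bg c, Bg d⁆) a) • ((t c * t d) * X) := by
      intro a
      simp only [hq, Finset.sum_mul, smul_mul_assoc]
    simp only [e1, Finset.smul_sum, smul_smul]
    rw [sum_pull3 (fun a c d => (Bl (Bg a) y * (Bg.repr ⁅Bg c, Bg d⁆) a) • ((t c * t d) * X))]
    refine Finset.sum_congr rfl fun c _ => Finset.sum_congr rfl fun d _ => ?_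
    rw [← Finset.sum_smul]
    congr 1
    rw [← hcontr ⁅Bg c, Bg d⁆ y]
    exact Finset.sum_congr rfl fun a _ => mul_comm _ _
  -- the quartic term vanishes by the Jacobi identity
  have hW34 : ∀ c d e f : ι, (t c * t d) * (t f * t e) = -((t c * t d) * (t e * t f)) := by
    intro c d e f; rw [hswap f e, mul_neg]
  have hW23 : ∀ c d e f : ι, (t c * t e) * (t d * t f) = -((t c * t d) * (t e * t f)) := by
    intro c d e f
    rw [mul_assoc, ← mul_assoc (t e), hswap e d, neg_mul, mul_neg, ← mul_assoc, ← mul_assoc,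
      mul_assoc (t c * t d)]
  have hWrot : ∀ c d e f : ι, (t c * t e) * (t f * t d) = (t c * t d) * (t e * t f) := by
    intro c d e f
    rw [hW34 c e d f, hW23 c d e f, neg_neg]
  have hQ : (∑ a : ι, ∑ b : ι, (Bl (Bg a) (Bg b)) • (q a * q b)) = 0 := by
    have st1 : (∑ a : ι, ∑ b : ι, (Bl (Bg a) (Bg b)) • (q a * q b))
        = ∑ b : ι, ∑ c : ι, ∑ d : ι, (Bl ⁅Bg c, Bg d⁆ (Bg b)) • ((t c * t d) * q b) := by
      rw [Finset.sum_comm]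
      exact Finset.sum_congr rfl fun b _ => hqmul (Bg b) (q b)
    have st2 : (∑ a : ι, ∑ b : ι, (Bl (Bg a) (Bg b)) • (q a * q b))
        = ∑ c : ι, ∑ d : ι, ∑ e : ι, ∑ f : ι,
            (Bl ⁅Bg c, Bg d⁆ ⁅Bg e, Bg f⁆) • ((t c * t d) * (t e * t f)) := by
      rw [st1, sum_pull3 (fun b c d => (Bl ⁅Bg c, Bg d⁆ (Bg b)) • ((t c * t d) * q b))]
      exact Finset.sum_congr rfl fun c _ => Finset.sum_congr rfl fun d _ =>
        hqmul' ⁅Bg c, Bg d⁆ (t c * t d)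
    set Q4 : A := ∑ c : ι, ∑ d : ι, ∑ e : ι, ∑ f : ι,
        (Bl ⁅Bg c, Bg d⁆ ⁅Bg e, Bg f⁆) • ((t c * t d) * (t e * t f)) with hQ4
    have hM : ∀ c d e f : ι, Bl ⁅Bg c, Bg d⁆ ⁅Bg e, Bg f⁆
        = Bl ⁅Bg c, Bg e⁆ ⁅Bg d, Bg f⁆ - Bl ⁅Bg c, Bg f⁆ ⁅Bg d, Bg e⁆ := by
      intro c d e f
      have j : (⁅Bg d, ⁅Bg e, Bg f⁆⁆ : g) = ⁅⁅Bg d, Bg e⁆, Bg f⁆ + ⁅Bg e, ⁅Bg d, Bg f⁆⁆ :=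
        leibniz_lie _ _ _
      calc Bl ⁅Bg c, Bg d⁆ ⁅Bg e, Bg f⁆ = Bl (Bg c) ⁅Bg d, ⁅Bg e, Bg f⁆⁆ := hinv _ _ _
        _ = Bl (Bg c) ⁅⁅Bg d, Bg e⁆, Bg f⁆ + Bl (Bg c) ⁅Bg e, ⁅Bg d, Bg f⁆⁆ := by
            rw [j, map_add]
        _ = Bl ⁅Bg c, Bg e⁆ ⁅Bg d, Bg f⁆ - Bl ⁅Bg c, Bg f⁆ ⁅Bg d, Bg e⁆ := by
            rw [← hinv (Bg c) (Bg e) ⁅Bg d, Bg f⁆,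
              show (⁅⁅Bg d, Bg e⁆, Bg f⁆ : g) = -⁅Bg f, ⁅Bg d, Bg e⁆⁆ from (lie_skew _ _).symm,
              map_neg, ← hinv (Bg c) (Bg f) ⁅Bg d, Bg e⁆]
            ring
    -- split Q4 by Jacobi
    have split : Q4 = (∑ c : ι, ∑ d : ι, ∑ e : ι, ∑ f : ι,
          (Bl ⁅Bg c, Bg e⁆ ⁅Bg d, Bg f⁆) • ((t c * t d) * (t e * t f)))
        - ∑ c : ι, ∑ d : ι, ∑ e : ι, ∑ f : ι,
          (Bl ⁅Bg c, Bg f⁆ ⁅Bg d, Bg e⁆) • ((t c * t d) * (t e * t f)) := by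
      rw [hQ4]
      refine (Finset.sum_congr rfl fun c _ => Finset.sum_congr rfl fun d _ =>
        Finset.sum_congr rfl fun e _ => Finset.sum_congr rfl fun f _ => by
          rw [hM c d e f, sub_smul]).trans ?_
      simp only [Finset.sum_sub_distrib]
    -- first piece equals -Q4
    have pieceB : (∑ c : ι, ∑ d : ι, ∑ e : ι, ∑ f : ι,
          (Bl ⁅Bg c, Bg e⁆ ⁅Bg d, Bg f⁆) • ((t c * t d) * (t e * t f))) = -Q4 := by
      rw [sum4_swap23 (fun c d e f => (Bl ⁅Bg c, Bg e⁆ ⁅Bg d, Bg f⁆) • ((t c * t d) * (t e * t f)))]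
      rw [hQ4, ← Finset.sum_neg_distrib]
      refine Finset.sum_congr rfl fun c _ => ?_
      rw [← Finset.sum_neg_distrib]
      refine Finset.sum_congr rfl fun d _ => ?_
      rw [← Finset.sum_neg_distrib]
      refine Finset.sum_congr rfl fun e _ => ?_
      rw [← Finset.sum_neg_distrib]
      refine Finset.sum_congr rfl fun f _ => ?_
      rw [hW23 c d e f, smul_neg]
    -- second piece equals Q4
    have pieceA : (∑ c : ι, ∑ d : ι, ∑ e : ι, ∑ f : ι,
          (Bl ⁅Bg c, Bg f⁆ ⁅Bg d, Bg e⁆) • ((t c * t d) * (t e * t f))) = Q4 := by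
      rw [sum4_rot (fun c d e f => (Bl ⁅Bg c, Bg f⁆ ⁅Bg d, Bg e⁆) • ((t c * t d) * (t e * t f)))]
      rw [hQ4]
      refine Finset.sum_congr rfl fun c _ => Finset.sum_congr rfl fun d _ =>
        Finset.sum_congr rfl fun e _ => Finset.sum_congr rfl fun f _ => ?_
      rw [hWrot c d e f]
    have h3Q : Q4 = -Q4 - Q4 := by
      conv_lhs => rw [split]
      rw [pieceB, pieceA]
    have h0 : Q4 + Q4 + Q4 = 0 := by
      nth_rewrite 1 [h3Q]; abel
    have h30 : (3 : ℝ) • Q4 = 0 := by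
      rw [show ((3:ℝ) • Q4) = Q4 + Q4 + Q4 by module]; exact h0
    rw [st2]
    have hfin := congrArg (fun x : A => ((3:ℝ)⁻¹) • x) h30
    simp only [smul_smul, smul_zero] at hfin
    norm_num at hfin
    exact hfin
  -- derivative of the quadratic part
  have h1 : d (∑ a : ι, ∑ b : ι, (Bl (Bg a) (Bg b)) • (d (t a) * t b))
      = ∑ a : ι, ∑ b : ι, (Bl (Bg a) (Bg b)) • (d (t a) * d (t b)) := by
    simp only [map_sum, map_smul, hleib, hd2, zero_mul, zero_add, hεdt]
  -- derivative of the cubic part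
  have hd3 : ∀ a b c : ι, d (t a * t b * t c)
      = d (t a) * t b * t c - t a * (d (t b) * t c) + t a * t b * d (t c) := by
    intro a b c
    rw [hleib (t a * t b) (t c), hleib (t a) (t b), hεt2, het]
    noncomm_ring
  have h3 : d (∑ a : ι, ∑ b : ι, ∑ c : ι, (Bl (Bg a) ⁅Bg b, Bg c⁆) • (t a * t b * t c))
      = (∑ a : ι, ∑ b : ι, ∑ c : ι, (Bl (Bg a) ⁅Bg b, Bg c⁆) • (d (t a) * t b * t c))
        - (∑ a : ι, ∑ b : ι, ∑ c : ι, (Bl (Bg a) ⁅Bg b, Bg c⁆) • (t a * (d (t b) * t c)))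
        + ∑ a : ι, ∑ b : ι, ∑ c : ι, (Bl (Bg a) ⁅Bg b, Bg c⁆) • (t a * t b * d (t c)) := by
    simp only [map_sum, map_smul, hd3, smul_add, smul_sub, Finset.sum_add_distrib,
      Finset.sum_sub_distrib]
  have h3b : (∑ a : ι, ∑ b : ι, ∑ c : ι, (Bl (Bg a) ⁅Bg b, Bg c⁆) • (t a * (d (t b) * t c)))
      = - ∑ a : ι, ∑ b : ι, ∑ c : ι, (Bl (Bg a) ⁅Bg b, Bg c⁆) • (d (t a) * t b * t c) := by
    rw [sum_swap12 (fun a b c => (Bl (Bg a) ⁅Bg b, Bg c⁆) • (t a * (d (t b) * t c))),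
      ← Finset.sum_neg_distrib]
    refine Finset.sum_congr rfl fun a _ => ?_
    rw [← Finset.sum_neg_distrib]
    refine Finset.sum_congr rfl fun b _ => ?_
    rw [← Finset.sum_neg_distrib]
    refine Finset.sum_congr rfl fun c _ => ?_
    rw [hCsw12 (Bg a) (Bg b) (Bg c), ← mul_assoc, ← heven _ _ (hεdt a), neg_smul]
  have h3c : (∑ a : ι, ∑ b : ι, ∑ c : ι, (Bl (Bg a) ⁅Bg b, Bg c⁆) • (t a * t b * d (t c)))
      = ∑ a : ι, ∑ b : ι, ∑ c : ι, (Bl (Bg a) ⁅Bg b, Bg c⁆) • (d (t a) * t b * t c) := by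
    rw [sum_rot3 (fun a b c => (Bl (Bg a) ⁅Bg b, Bg c⁆) • (t a * t b * d (t c)))]
    refine Finset.sum_congr rfl fun a _ => Finset.sum_congr rfl fun b _ =>
      Finset.sum_congr rfl fun c _ => ?_
    rw [hCrot (Bg b) (Bg c) (Bg a), ← heven _ _ (hεdt a), ← mul_assoc]
  -- the cubic-derivative in contracted form
  have hT1 : (∑ a : ι, ∑ b : ι, ∑ c : ι, (Bl (Bg a) ⁅Bg b, Bg c⁆) • (d (t a) * t b * t c))
      = ∑ a : ι, ∑ b : ι, (Bl (Bg a) (Bg b)) • (d (t a) * q b) := by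
    refine Finset.sum_congr rfl fun a _ => ?_
    exact (Finset.sum_congr rfl fun b _ => Finset.sum_congr rfl fun c _ => by
      rw [mul_assoc]).trans (hqmul' (Bg a) (d (t a))).symm
  -- expansion of the curvature square
  have hRHS : (∑ a : ι, ∑ b : ι, (Bl (Bg a) (Bg b)) • (s a * s b))
      = (∑ a : ι, ∑ b : ι, (Bl (Bg a) (Bg b)) • (d (t a) * d (t b)))
        + ((∑ a : ι, ∑ b : ι, ((1:ℝ)/2) • ((Bl (Bg a) (Bg b)) • (d (t a) * q b)))
        + ((∑ a : ι, ∑ b : ι, ((1:ℝ)/2) • ((Bl (Bg a) (Bg b)) • (q a * d (t b))))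
        + ∑ a : ι, ∑ b : ι, (((1:ℝ)/2)*((1:ℝ)/2)) • ((Bl (Bg a) (Bg b)) • (q a * q b)))) := by
    have leaf : ∀ a b : ι, (Bl (Bg a) (Bg b)) • (s a * s b)
        = (Bl (Bg a) (Bg b)) • (d (t a) * d (t b))
          + (((1:ℝ)/2) • ((Bl (Bg a) (Bg b)) • (d (t a) * q b))
          + (((1:ℝ)/2) • ((Bl (Bg a) (Bg b)) • (q a * d (t b)))
          + (((1:ℝ)/2)*((1:ℝ)/2)) • ((Bl (Bg a) (Bg b)) • (q a * q b)))) := by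
      intro a b
      rw [hs a, hs b]
      simp only [mul_add, add_mul, smul_mul_assoc, mul_smul_comm]
      module
    simp only [leaf, Finset.sum_add_distrib]
  have hsuy : (∑ a : ι, ∑ b : ι, (Bl (Bg a) (Bg b)) • (q a * d (t b)))
      = ∑ a : ι, ∑ b : ι, (Bl (Bg a) (Bg b)) • (d (t a) * q b) := by
    rw [Finset.sum_comm]
    exact Finset.sum_congr rfl fun a _ => Finset.sum_congr rfl fun b _ => by
      rw [hsymm (Bg b) (Bg a), heven _ _ (hεq b)]
  constructor
  · -- part 1 : d(cs) = the invariant polynomial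
    rw [map_add, map_smul, h1, h3, h3b, h3c, hT1, hRHS]
    simp only [← Finset.smul_sum]
    rw [hsuy, hQ, smul_zero, add_zero]
    module
  · -- part 2 : i(cs) is the multiple of the 3-cocycle
    have hA3comm : ∀ b c d : ι, t c * t d * t b = t b * t c * t d := by
      intro b c d
      rw [mul_assoc, hswap d b, mul_neg, ← mul_assoc, hswap c b, neg_mul, neg_neg]
    have hqt : ∀ a b : ι, q a * t b
        = ∑ c : ι, ∑ d : ι, ((Bg.repr ⁅Bg c, Bg d⁆) a) • (t b * t c * t d) := by
      intro a b
      simp only [hq, Finset.sum_mul, smul_mul_assoc]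
      exact Finset.sum_congr rfl fun c _ => Finset.sum_congr rfl fun d _ => by
        rw [hA3comm b c d]
    have hidt : ∀ a : ι, i (d (t a)) = (-(1:ℝ)/2) • i (q a) := by
      intro a; rw [hdt' a, map_add, map_smul, his, add_zero]
    have hiA3 : i (∑ a : ι, ∑ b : ι, ∑ c : ι, (Bl (Bg a) ⁅Bg b, Bg c⁆) • (t a * t b * t c))
        = ∑ a : ι, ∑ b : ι, ∑ c : ι, (Bl (Bg a) ⁅Bg b, Bg c⁆) • (tc a * tc b * tc c) := by
      simp only [map_sum, map_smul, map_mul, hit]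
    have step2 : ∀ b : ι, (∑ a : ι, (Bl (Bg a) (Bg b)) • i (q a * t b))
        = ∑ c : ι, ∑ d : ι, (Bl ⁅Bg c, Bg d⁆ (Bg b)) • (tc b * tc c * tc d) := by
      intro b
      have e1 : ∀ a : ι, i (q a * t b)
          = ∑ c : ι, ∑ d : ι, ((Bg.repr ⁅Bg c, Bg d⁆) a) • (tc b * tc c * tc d) := by
        intro a; rw [hqt a b]; simp only [map_sum, map_smul, map_mul, hit]
      simp only [e1, Finset.smul_sum, smul_smul]
      rw [sum_pull3 (fun a c d =>
        ((Bl (Bg a) (Bg b)) * (Bg.repr ⁅Bg c, Bg d⁆) a) • (tc b * tc c * tc d))]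
      refine Finset.sum_congr rfl fun c _ => Finset.sum_congr rfl fun d _ => ?_
      rw [← Finset.sum_smul]
      congr 1
      rw [← hcontr ⁅Bg c, Bg d⁆ (Bg b)]
      exact Finset.sum_congr rfl fun a _ => mul_comm _ _
    have hiA1 : i (∑ a : ι, ∑ b : ι, (Bl (Bg a) (Bg b)) • (d (t a) * t b))
        = (-(1:ℝ)/2) • ∑ a : ι, ∑ b : ι, ∑ c : ι,
            (Bl (Bg a) ⁅Bg b, Bg c⁆) • (tc a * tc b * tc c) := by
      calc i (∑ a : ι, ∑ b : ι, (Bl (Bg a) (Bg b)) • (d (t a) * t b))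
          = ∑ a : ι, ∑ b : ι, (Bl (Bg a) (Bg b)) • ((-(1:ℝ)/2) • i (q a * t b)) := by
            simp only [map_sum, map_smul]
            refine Finset.sum_congr rfl fun a _ => Finset.sum_congr rfl fun b _ => ?_
            rw [map_mul, hidt a, smul_mul_assoc, ← map_mul]
        _ = ∑ b : ι, (-(1:ℝ)/2) • ∑ a : ι, (Bl (Bg a) (Bg b)) • i (q a * t b) := by
            rw [Finset.sum_comm]
            exact Finset.sum_congr rfl fun b _ => by
              rw [Finset.smul_sum]
              exact Finset.sum_congr rfl fun a _ => smul_comm _ _ _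
        _ = ∑ b : ι, (-(1:ℝ)/2) • ∑ c : ι, ∑ d : ι,
              (Bl (Bg b) ⁅Bg c, Bg d⁆) • (tc b * tc c * tc d) := by
            refine Finset.sum_congr rfl fun b _ => ?_
            rw [step2 b]
            exact congrArg _ (Finset.sum_congr rfl fun c _ => Finset.sum_congr rfl fun d _ => by
              rw [hsymm])
        _ = (-(1:ℝ)/2) • ∑ a : ι, ∑ b : ι, ∑ c : ι,
              (Bl (Bg a) ⁅Bg b, Bg c⁆) • (tc a * tc b * tc c) := by
            rw [← Finset.smul_sum]
    rw [map_add, map_smul, hiA1, hiA3]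
    module
end

section
/- Let t : h ↪ g be the inclusion of an ideal into a finite-dimensional Lie algebra g. The canonical DGCA morphism p : CE(h ↪ g) → CE(g) (identity on g*, zero on h*[1]) composed with t* : CE(g) → CE(h) is chain-homotopic to zero: the degree −1 derivation τ on the mapping cone with τ(σt*(a)) = t*(a) and τ|_{g*} = 0, extended appropriately, satisfies [d, τ] = t* ∘ p on generators, exhibiting CE(h ↪ g) as lying in the weak kernel of t*. -/
/-- **The mapping cone lies in the weak kernel of `t*`.**
Let `I ⊆ g` be an ideal of a finite-dimensional real Lie algebra, `A` model the mapping
cone `CE(I ↪ g) = Λ•(g* ⊕ I*[1])` (odd generators `u a`, even generators `v j`), `Bg`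
model `CE(g)` (generators `ug a`) and `Bh` model `CE(I)` (generators `w j`).  Let
`p : CE(I ↪ g) → CE(g)` be the canonical DGCA morphism (identity on `g*`, zero on
`I*[1]`) and `th : CE(g) → CE(I)` the restriction morphism `t*`.  Then the degree `-1`
map `τ` with `τ(σt* a) = t* a` (i.e. `τ (v j) = w j`) and `τ|_{g*} = 0`, extended
appropriately, satisfies `[d, τ] = t* ∘ p` on the generators; hence the composite
`t* ∘ p` is chain homotopic to zero, exhibiting `CE(I ↪ g)` as lying in the weak kernel
of `t*`. -/
theorem mapping_cone_weak_kernel_homotopy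
    {ι κ : Type*} [Fintype ι] [Fintype κ]
    (g : Type*) [LieRing g] [LieAlgebra ℝ g] (Bgb : Module.Basis ι ℝ g)
    (I : LieIdeal ℝ g) (BI : Module.Basis κ ℝ I)
    -- the mapping cone algebra A = CE(I ↪ g):
    (A : Type*) [Ring A] [Algebra ℝ A]
    (ε : A →ₐ[ℝ] A) (d : A →ₗ[ℝ] A)
    (heven : ∀ x y : A, ε x = x → x * y = y * x)
    (hodd : ∀ x y : A, ε x = -x → ε y = -y → x * y = -(y * x))
    (hleib : ∀ x y : A, d (x * y) = d x * y + ε x * d y)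
    (u : ι → A) (v : κ → A)
    (heu : ∀ a, ε (u a) = - u a)
    (hev : ∀ j, ε (v j) = v j)
    (hdu : ∀ a, d (u a) =
      (-(1 : ℝ)/2) • (∑ b : ι, ∑ c : ι, ((Bgb.repr ⁅Bgb b, Bgb c⁆) a) • (u b * u c))
        + ∑ j : κ, ((Bgb.repr (↑(BI j) : g)) a) • v j)
    (hdv : ∀ j, d (v j) =
      - ∑ b : ι, ∑ k : κ,
          ((BI.repr ⟨⁅Bgb b, (↑(BI k) : g)⁆, I.lie_mem (BI k).2⟩) j) • (u b * v k))
    -- CE(g):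
    (Bg : Type*) [Ring Bg] [Algebra ℝ Bg]
    (ug : ι → Bg)
    -- CE(I):
    (Bh : Type*) [Ring Bh] [Algebra ℝ Bh]
    (dh : Bh →ₗ[ℝ] Bh)
    (w : κ → Bh)
    (hdw : ∀ j, dh (w j) =
      (-(1 : ℝ)/2) • (∑ b : κ, ∑ c : κ,
        ((BI.repr ⟨⁅(↑(BI b) : g), (↑(BI c) : g)⁆, I.lie_mem (BI c).2⟩) j) • (w b * w c)))
    -- the canonical projection p : CE(I ↪ g) → CE(g)  and the restriction t* :
    (p : A →ₐ[ℝ] Bg)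
    (hpu : ∀ a, p (u a) = ug a)
    (hpv : ∀ j, p (v j) = 0)
    (th : Bg →ₐ[ℝ] Bh)
    (hth : ∀ a, th (ug a) = ∑ j : κ, ((Bgb.repr (↑(BI j) : g)) a) • w j)
    -- the homotopy τ : its values on generators and on the relevant products:
    (τ : A →ₗ[ℝ] Bh)
    (hτu : ∀ a, τ (u a) = 0)
    (hτv : ∀ j, τ (v j) = w j)
    (hτuu : ∀ x ∈ Submodule.span ℝ {z : A | ∃ b c : ι, z = u b * u c}, τ x = 0)
    (hτmix : ∀ (b : ι) (k : κ),
      τ (u b * v k) = (-(1 : ℝ)/2) • (th (p (u b)) * w k)) :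
    -- `[d, τ] = t* ∘ p` on the generators:
    (∀ a, dh (τ (u a)) + τ (d (u a)) = th (p (u a))) ∧
    (∀ j, dh (τ (v j)) + τ (d (v j)) = th (p (v j))) := by

  -- the key scalar identity: change of basis for the structure constants
  have key : ∀ (j m k : κ),
      (∑ b : ι, (Bgb.repr (↑(BI m) : g)) b *
        ((BI.repr ⟨⁅Bgb b, (↑(BI k) : g)⁆, I.lie_mem (BI k).2⟩) j))
      = (BI.repr ⟨⁅(↑(BI m) : g), (↑(BI k) : g)⁆, I.lie_mem (BI k).2⟩) j := by
    intro j m k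
    set F : g →ₗ[ℝ] I :=
      { toFun := fun x => ⟨⁅x, (↑(BI k) : g)⁆, I.lie_mem (BI k).2⟩
        map_add' := by intro x y; ext; simp [add_lie]
        map_smul' := by intro c x; ext; simp [smul_lie] } with hF
    set L : g →ₗ[ℝ] ℝ := (BI.coord j).comp F with hL
    have h1 : ∀ x : g, L x = (BI.repr ⟨⁅x, (↑(BI k) : g)⁆, I.lie_mem (BI k).2⟩) j := by
      intro x; simp [hL, hF, Module.Basis.coord]
    have h2 := Bgb.sum_repr (↑(BI m) : g)
    calc (∑ b : ι, (Bgb.repr (↑(BI m) : g)) b *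
            ((BI.repr ⟨⁅Bgb b, (↑(BI k) : g)⁆, I.lie_mem (BI k).2⟩) j))
        = ∑ b : ι, (Bgb.repr (↑(BI m) : g)) b • L (Bgb b) := by
          simp [h1, smul_eq_mul]
      _ = L (∑ b : ι, (Bgb.repr (↑(BI m) : g)) b • Bgb b) := by
          rw [map_sum]; simp
      _ = _ := by rw [h2, h1]
  constructor
  · intro a
    rw [hτu, map_zero, zero_add, hdu, map_add, map_smul, hpu, hth]
    have hz : τ (∑ b : ι, ∑ c : ι, ((Bgb.repr ⁅Bgb b, Bgb c⁆) a) • (u b * u c)) = 0 := by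
      apply hτuu
      apply Submodule.sum_mem
      intro b _
      apply Submodule.sum_mem
      intro c _
      exact Submodule.smul_mem _ _ (Submodule.subset_span ⟨b, c, rfl⟩)
    rw [hz, smul_zero, zero_add, map_sum]
    simp [hτv]
  · intro j
    rw [hτv, hdw, hdv, hpv, map_zero, map_neg, map_sum]
    simp only [map_sum, map_smul, hτmix, hpu, hth]
    have hswap : ∀ (s : ℝ) (x : Bh), s • ((-(1:ℝ))/2) • x = ((-(1:ℝ))/2) • s • x :=
      fun s x => smul_comm s _ x
    simp only [hswap, ← Finset.smul_sum]
    rw [← smul_neg, ← smul_add]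
    have hS2 : (∑ b : ι, ∑ k : κ,
          ((BI.repr ⟨⁅Bgb b, (↑(BI k) : g)⁆, I.lie_mem (BI k).2⟩) j) •
            ((∑ m : κ, ((Bgb.repr (↑(BI m) : g)) b) • w m) * w k))
        = ∑ k : κ, ∑ m : κ,
          ((BI.repr ⟨⁅(↑(BI m) : g), (↑(BI k) : g)⁆, I.lie_mem (BI k).2⟩) j) • (w m * w k) := by
      rw [Finset.sum_comm]
      apply Finset.sum_congr rfl
      intro k _
      calc (∑ b : ι,
            ((BI.repr ⟨⁅Bgb b, (↑(BI k) : g)⁆, I.lie_mem (BI k).2⟩) j) •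
              ((∑ m : κ, ((Bgb.repr (↑(BI m) : g)) b) • w m) * w k))
          = ∑ b : ι, ∑ m : κ,
              (((Bgb.repr (↑(BI m) : g)) b *
                (BI.repr ⟨⁅Bgb b, (↑(BI k) : g)⁆, I.lie_mem (BI k).2⟩) j)) • (w m * w k) := by
            apply Finset.sum_congr rfl
            intro b _
            rw [Finset.sum_mul, Finset.smul_sum]
            apply Finset.sum_congr rfl
            intro m _
            rw [smul_mul_assoc, smul_smul, mul_comm]
        _ = ∑ m : κ, ∑ b : ι,
              (((Bgb.repr (↑(BI m) : g)) b *
                (BI.repr ⟨⁅Bgb b, (↑(BI k) : g)⁆, I.lie_mem (BI k).2⟩) j)) • (w m * w k) :=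
            Finset.sum_comm
        _ = _ := by
            apply Finset.sum_congr rfl
            intro m _
            rw [← Finset.sum_smul, key j m k]
    have hC : (∑ b : κ, ∑ c : κ,
          ((BI.repr ⟨⁅(↑(BI b) : g), (↑(BI c) : g)⁆, I.lie_mem (BI c).2⟩) j) • (w b * w c))
        = ∑ k : κ, ∑ m : κ,
          ((BI.repr ⟨⁅(↑(BI m) : g), (↑(BI k) : g)⁆, I.lie_mem (BI k).2⟩) j) • (w m * w k) :=
      Finset.sum_comm
    rw [hC, hS2, add_neg_cancel, smul_zero]
end
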